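/- Let R be a ring and x, y, z elements satisfying x*y = y*x, z*x = (x+1)*z, and z*y = (y-a)*z for a central element a. Then for every polynomial f in two commuting variables and every natural number r: z^r * f(x, y) = f(x + r, y - r*a) * z^r. -/

import Mathlib

/-- Evaluation of an integer polynomial in two variables at a pair of
(commuting) elements `x`, `y` of a possibly noncommutative ring, placing all
powers of `x` to the left of powers of `y`. -/
noncomputable def evalXY {R : Type*} [Ring R] (x y : R)
    (f : MvPolynomial (Fin 2) ℤ) : R :=
  ∑ m ∈ f.support, ((MvPolynomial.coeff m f : ℤ) : R) * x ^ m 0 * y ^ m 1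

private lemma zpow_comm_aux {R : Type*} [Ring R] {z u v : R} (h : z * u = v * z) :
    ∀ n : ℕ, z * u ^ n = v ^ n * z := by
  intro n
  induction n with
  | zero => simp
  | succ n ih =>
    rw [pow_succ, pow_succ, ← mul_assoc, ih, mul_assoc, h, ← mul_assoc]

private lemma z_step {R : Type*} [Ring R] (x y z a : R)
    (hzx : z * x = (x + 1) * z) (hzy : z * y = (y - a) * z)
    (f : MvPolynomial (Fin 2) ℤ) :
    z * evalXY x y f = evalXY (x + 1) (y - a) f * z := by
  unfold evalXY
  rw [Finset.mul_sum, Finset.sum_mul]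
  refine Finset.sum_congr rfl fun m _ => ?_
  rw [← mul_assoc, ← mul_assoc, ← Int.cast_comm, mul_assoc ((_ : ℤ) : R),
    zpow_comm_aux hzx, ← mul_assoc, mul_assoc, zpow_comm_aux hzy, ← mul_assoc]

private lemma aux {R : Type*} [Ring R] (x y z a : R)
    (hac : ∀ r : R, a * r = r * a)
    (hzx : z * x = (x + 1) * z) (hzy : z * y = (y - a) * z)
    (f : MvPolynomial (Fin 2) ℤ) (r : ℕ) :
    z ^ r * evalXY x y f = evalXY (x + (r : R)) (y - (r : R) * a) f * z ^ r := by
  induction r generalizing x y with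
  | zero => simp
  | succ r ih =>
    have hzx' : z * (x + 1) = ((x + 1) + 1) * z := by
      rw [mul_add, hzx, mul_one]; noncomm_ring
    have hzy' : z * (y - a) = ((y - a) - a) * z := by
      rw [mul_sub, hzy, ← hac z]; noncomm_ring
    have := ih (x + 1) (y - a) hzx' hzy'
    have e1 : x + 1 + (r : R) = x + ((r : ℕ) + 1 : ℕ) := by push_cast; abel
    have e2 : y - a - (r : R) * a = y - ((r : ℕ) + 1 : ℕ) * a := by push_cast; noncomm_ring
    rw [pow_succ, mul_assoc, z_step x y z a hzx hzy, ← mul_assoc, this,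
      e1, e2, mul_assoc, ← pow_succ]

theorem zr_poly_shift {R : Type*} [Ring R] (x y z a : R)
    (hac : ∀ r : R, a * r = r * a)
    (hxy : x * y = y * x) (hzx : z * x = (x + 1) * z)
    (hzy : z * y = (y - a) * z) :
    ∀ (f : MvPolynomial (Fin 2) ℤ) (r : ℕ),
      z ^ r * evalXY x y f = evalXY (x + (r : R)) (y - (r : R) * a) f * z ^ r := by
  intro f r
  exact aux x y z a hac hzx hzy f r
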